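/- Let c ∈ (−1,1) and let T ∈ B(H) be a bounded linear bijection with bounded inverse. Then ε̂(T⁻¹, c) = ε̂(T, c). -/

import Mathlib

set_option maxHeartbeats 1000000

open scoped RealInnerProductSpace

/-- The minimum modulus `[T]` of a bounded linear map: the infimum of `‖T x‖`
over unit vectors `x`. -/
noncomputable def minMod {H K : Type*} [NormedAddCommGroup H] [InnerProductSpace ℝ H]
    [NormedAddCommGroup K] [InnerProductSpace ℝ K] (T : H →L[ℝ] K) : ℝ :=
  ⨅ x : {x : H // ‖x‖ = 1}, ‖T x‖

/-- `T` is `(ε, c)`-angle preserving. -/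
def AnglePres {H K : Type*} [NormedAddCommGroup H] [InnerProductSpace ℝ H]
    [NormedAddCommGroup K] [InnerProductSpace ℝ K] (c ε : ℝ) (T : H →L[ℝ] K) : Prop :=
  ∀ x y : H, ⟪x, y⟫ = c * ‖x‖ * ‖y‖ →
    |⟪T x, T y⟫ - c * ‖T x‖ * ‖T y‖| ≤ ε * ‖T x‖ * ‖T y‖

/-- `ε̂(T, c)`: the smallest `ε` for which `T` is `(ε, c)`-angle preserving. -/
noncomputable def epsHat {H K : Type*} [NormedAddCommGroup H] [InnerProductSpace ℝ H]
    [NormedAddCommGroup K] [InnerProductSpace ℝ K] (c : ℝ) (T : H →L[ℝ] K) : ℝ :=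
  sInf {ε : ℝ | ε ∈ Set.Icc 0 (1 + |c|) ∧ AnglePres c ε T}

private lemma rot_exists (A B : ℝ) : ∃ u v : ℝ, u^2 + v^2 = 1 ∧ A*(u*v) + B*(u^2 - v^2) = 0 := by
  by_cases hB : B = 0
  · exact ⟨1, 0, by norm_num, by simp [hB]⟩
  · have hB2 : 0 < B^2 := by positivity
    set r := Real.sqrt (A^2 + 4*B^2) with hrdef
    have hr2 : r^2 = A^2 + 4*B^2 := Real.sq_sqrt (by positivity)
    have hr0 : 0 < r := Real.sqrt_pos.2 (by nlinarith)
    set C := -A / r with hCdef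
    set S := 2*B / r with hSdef
    have hCS : C^2 + S^2 = 1 := by
      field_simp [hCdef, hSdef]
      rw [hCdef, hSdef, div_pow, div_pow, ← add_div, div_eq_one_iff_eq (by positivity)]; nlinarith [hr2]
    have hS2 : 0 < S^2 := by
      have : S ≠ 0 := div_ne_zero (by simpa using hB) hr0.ne'
      positivity
    have hC2 : C^2 < 1 := by nlinarith
    have hClt : C < 1 := by nlinarith [sq_nonneg (C-1)]
    have hCgt : -1 < C := by nlinarith [sq_nonneg (C+1)]
    set u := Real.sqrt ((1+C)/2) with hudef
    have hu2 : u^2 = (1+C)/2 := Real.sq_sqrt (by linarith)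
    have hu0 : 0 < u := Real.sqrt_pos.2 (by linarith)
    set v := S / (2*u) with hvdef
    have hv2 : v^2 = S^2 / (4 * u^2) := by rw [hvdef, div_pow]; congr 1; ring
    have h1C : (1:ℝ) + C ≠ 0 := by linarith
    have huv : u^2 + v^2 = 1 := by
      rw [hv2, hu2]
      field_simp
      nlinarith [hCS]
    refine ⟨u, v, huv, ?_⟩
    have h1 : u * v = S / 2 := by rw [hvdef]; field_simp
    have h2 : u^2 - v^2 = C := by nlinarith [huv, hu2]
    rw [h1, h2, hCdef, hSdef]
    field_simp
    ring

private lemma side_ineq (μ₁ μ₂ c d t : ℝ) (h2 : 0 < μ₂) (hc1 : -1 < c) (hc2 : c < 1)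
    (ht1 : μ₂ ≤ t) (ht2 : t ≤ μ₁) (hd : c < d)
    (hq1 : 0 ≤ (1-c^2)*t^2 - 2*μ₂*(1-c*d)*t + μ₂^2*(1-d^2))
    (hq2 : 0 ≤ (1-c^2)*t^2 - 2*μ₁*(1-c*d)*t + μ₁^2*(1-d^2)) :
    (d-c) * ((1+c)*μ₁+(1-c)*μ₂) ≤ (1-c^2)*(μ₁-μ₂) := by
  have hcc : 0 < 1 - c^2 := by nlinarith
  have h1 : 0 < μ₁ := lt_of_lt_of_le h2 (le_trans ht1 ht2)
  have fact1 : ((1-c^2)*t - (1+c)*(1-d)*μ₂)*((1-c^2)*t - (1-c)*(1+d)*μ₂)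
      = (1-c^2)*((1-c^2)*t^2 - 2*μ₂*(1-c*d)*t + μ₂^2*(1-d^2)) := by ring
  have fact2 : ((1-c^2)*t - (1+c)*(1-d)*μ₁)*((1-c^2)*t - (1-c)*(1+d)*μ₁)
      = (1-c^2)*((1-c^2)*t^2 - 2*μ₁*(1-c*d)*t + μ₁^2*(1-d^2)) := by ring
  have hf1 : 0 < (1-c^2)*t - (1+c)*(1-d)*μ₂ := by
    nlinarith [mul_le_mul_of_nonneg_left ht1 hcc.le,
      mul_pos (mul_pos (show (0:ℝ) < 1+c by linarith) (show (0:ℝ) < d - c by linarith)) h2]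
  have hs1 : 0 ≤ (1-c^2)*t - (1-c)*(1+d)*μ₂ := by nlinarith
  have hs2 : (1-c^2)*t - (1-c)*(1+d)*μ₁ < 0 := by
    nlinarith [mul_le_mul_of_nonneg_left ht2 hcc.le,
      mul_pos (mul_pos (show (0:ℝ) < 1-c by linarith) (show (0:ℝ) < d - c by linarith)) h1]
  have hf2 : (1-c^2)*t - (1+c)*(1-d)*μ₁ ≤ 0 := by nlinarith
  nlinarith

private lemma backward_bound (μ₁ μ₂ c x₁ x₂ y₁ y₂ a b : ℝ)
    (h2 : 0 < μ₂) (h12 : μ₂ ≤ μ₁) (hc1 : -1 < c) (hc2 : c < 1)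
    (hx : x₁^2 + x₂^2 = 1) (hy : y₁^2 + y₂^2 = 1)
    (ha : a^2 = μ₁*x₁^2 + μ₂*x₂^2) (hb : b^2 = μ₁*y₁^2 + μ₂*y₂^2)
    (ha0 : 0 ≤ a) (hb0 : 0 ≤ b)
    (hs : μ₁*x₁*y₁ + μ₂*x₂*y₂ = c * (a*b)) :
    |x₁*y₁ + x₂*y₂ - c| * ((1-|c|)*μ₁ + (1+|c|)*μ₂) ≤ (1-c^2)*(μ₁-μ₂) := by
  have h1 : 0 < μ₁ := lt_of_lt_of_le h2 h12
  have ha2 : μ₂ ≤ a^2 := by nlinarith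
  have ha1 : a^2 ≤ μ₁ := by nlinarith
  have hb2 : μ₂ ≤ b^2 := by nlinarith
  have hb1 : b^2 ≤ μ₁ := by nlinarith
  have eA : a^2 - μ₂ = (μ₁-μ₂)*x₁^2 := by rw [ha]; linear_combination μ₂*hx
  have eB : b^2 - μ₂ = (μ₁-μ₂)*y₁^2 := by rw [hb]; linear_combination μ₂*hy
  have eA' : μ₁ - a^2 = (μ₁-μ₂)*x₂^2 := by rw [ha]; linear_combination (-μ₁)*hx
  have eB' : μ₁ - b^2 = (μ₁-μ₂)*y₂^2 := by rw [hb]; linear_combination (-μ₁)*hy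
  obtain ⟨d, hd⟩ : ∃ d, x₁*y₁ + x₂*y₂ = d := ⟨_, rfl⟩
  obtain ⟨t, htdef⟩ : ∃ t, a*b = t := ⟨_, rfl⟩
  rw [htdef] at hs
  rw [hd]
  have ht0 : 0 ≤ t := htdef ▸ mul_nonneg ha0 hb0
  have htsq : t^2 = a^2*b^2 := by rw [← htdef]; ring
  have ht1 : μ₂ ≤ t := by nlinarith
  have ht2 : t ≤ μ₁ := by nlinarith
  have e1 : (c*t - d*μ₂)^2 = (a^2-μ₂)*(b^2-μ₂) := by
    rw [← hs, ← hd, eA, eB]; ring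
  have e2 : (c*t - d*μ₁)^2 = (μ₁-a^2)*(μ₁-b^2) := by
    rw [← hs, ← hd, eA', eB']; ring
  have z2 : t^2 - a^2*b^2 = 0 := by rw [htsq]; ring
  have hq1 : 0 ≤ (1-c^2)*t^2 - 2*μ₂*(1-c*d)*t + μ₂^2*(1-d^2) := by
    have expand : (1-c^2)*t^2 - 2*μ₂*(1-c*d)*t + μ₂^2*(1-d^2)
        = μ₂*(a-b)^2 + (2*μ₂*(a*b) - 2*μ₂*t)
          - ((c*t-d*μ₂)^2 - (a^2-μ₂)*(b^2-μ₂)) + (t^2 - a^2*b^2) := by ring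
    have z1 : (c*t-d*μ₂)^2 - (a^2-μ₂)*(b^2-μ₂) = 0 := by rw [e1]; ring
    have z3 : 2*μ₂*(a*b) - 2*μ₂*t = 0 := by rw [htdef]; ring
    rw [expand, z1, z2, z3]
    have := mul_nonneg h2.le (sq_nonneg (a-b))
    linarith
  have hq2 : 0 ≤ (1-c^2)*t^2 - 2*μ₁*(1-c*d)*t + μ₁^2*(1-d^2) := by
    have expand : (1-c^2)*t^2 - 2*μ₁*(1-c*d)*t + μ₁^2*(1-d^2)
        = μ₁*(a-b)^2 + (2*μ₁*(a*b) - 2*μ₁*t)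
          - ((c*t-d*μ₁)^2 - (μ₁-a^2)*(μ₁-b^2)) + (t^2 - a^2*b^2) := by ring
    have z1 : (c*t-d*μ₁)^2 - (μ₁-a^2)*(μ₁-b^2) = 0 := by rw [e2]; ring
    have z3 : 2*μ₁*(a*b) - 2*μ₁*t = 0 := by rw [htdef]; ring
    rw [expand, z1, z2, z3]
    have := mul_nonneg h1.le (sq_nonneg (a-b))
    linarith
  rcases lt_trichotomy c d with h | h | h
  · have habs' : |d - c| = d - c := abs_of_pos (by linarith)
    have key := side_ineq μ₁ μ₂ c d t h2 hc1 hc2 ht1 ht2 h hq1 hq2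
    have hDle : (1-|c|)*μ₁ + (1+|c|)*μ₂ ≤ (1+c)*μ₁+(1-c)*μ₂ := by
      nlinarith [mul_nonneg (show (0:ℝ) ≤ c + |c| by cases abs_cases c <;> linarith)
        (sub_nonneg.2 h12)]
    rw [habs']
    calc (d-c) * ((1-|c|)*μ₁ + (1+|c|)*μ₂) ≤ (d-c) * ((1+c)*μ₁+(1-c)*μ₂) :=
          mul_le_mul_of_nonneg_left hDle (by linarith)
      _ ≤ (1-c^2)*(μ₁-μ₂) := key
  · rw [← h, sub_self, abs_zero, zero_mul]
    have : 0 < 1 - c^2 := by nlinarith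
    exact mul_nonneg this.le (by linarith)
  · have habs' : |d - c| = c - d := by rw [abs_sub_comm]; exact abs_of_pos (by linarith)
    have key := side_ineq μ₁ μ₂ (-c) (-d) t h2 (by linarith) (by linarith) ht1 ht2 (by linarith)
      (by nlinarith [hq1]) (by nlinarith [hq2])
    have hDle : (1-|c|)*μ₁ + (1+|c|)*μ₂ ≤ (1-c)*μ₁+(1+c)*μ₂ := by
      nlinarith [mul_nonneg (show (0:ℝ) ≤ |c| - c by cases abs_cases c <;> linarith)
        (sub_nonneg.2 h12)]
    rw [habs']
    calc (c-d) * ((1-|c|)*μ₁ + (1+|c|)*μ₂) ≤ (c-d) * ((1-c)*μ₁+(1+c)*μ₂) :=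
          mul_le_mul_of_nonneg_left hDle (by linarith)
      _ ≤ (1-c^2)*(μ₁-μ₂) := by nlinarith [key]

private lemma norm_from_sq {H : Type*} [NormedAddCommGroup H] [InnerProductSpace ℝ H]
    (x : H) (r : ℝ) (h : ‖x‖^2 = r) : ‖x‖ = Real.sqrt r := by
  rw [← h, Real.sqrt_sq (norm_nonneg x)]

private lemma forward_pair {H : Type*} [NormedAddCommGroup H] [InnerProductSpace ℝ H]
    (c ε : ℝ) (hc1 : -1 < c) (hc2 : c < 1) (S : H →L[ℝ] H) (hAP : AnglePres c ε S)
    (e₁ e₂ : H) (h1 : ⟪e₁,e₁⟫ = 1) (h2 : ⟪e₂,e₂⟫ = 1) (h12 : ⟪e₁,e₂⟫ = 0)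
    (hT12 : ⟪S e₁, S e₂⟫ = 0) :
    (1-c^2)*|⟪S e₁, S e₁⟫ - ⟪S e₂, S e₂⟫|
      ≤ ε * ((1+c)*⟪S e₁, S e₁⟫ + (1-c)*⟪S e₂, S e₂⟫) := by
  have h21 : ⟪e₂,e₁⟫ = 0 := by rw [real_inner_comm]; exact h12
  have hT21 : ⟪S e₂, S e₁⟫ = 0 := by rw [real_inner_comm]; exact hT12
  obtain ⟨μa, hμa⟩ : ∃ m, ⟪S e₁, S e₁⟫ = m := ⟨_, rfl⟩
  obtain ⟨μb, hμb⟩ : ∃ m, ⟪S e₂, S e₂⟫ = m := ⟨_, rfl⟩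
  obtain ⟨P, hP2, hP0⟩ : ∃ P:ℝ, P^2 = (1+c)/2 ∧ 0 ≤ P :=
    ⟨Real.sqrt ((1+c)/2), Real.sq_sqrt (by linarith), Real.sqrt_nonneg _⟩
  obtain ⟨Q, hQ2, hQ0⟩ : ∃ Q:ℝ, Q^2 = (1-c)/2 ∧ 0 ≤ Q :=
    ⟨Real.sqrt ((1-c)/2), Real.sq_sqrt (by linarith), Real.sqrt_nonneg _⟩
  obtain ⟨z₁, hz1⟩ : ∃ z, P • e₁ + Q • e₂ = z := ⟨_, rfl⟩
  obtain ⟨z₂, hz2⟩ : ∃ z, P • e₁ - Q • e₂ = z := ⟨_, rfl⟩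
  have hipz : ⟪z₁, z₂⟫ = P^2 - Q^2 := by
    rw [← hz1, ← hz2]
    simp only [inner_add_left, inner_sub_right, real_inner_smul_left, real_inner_smul_right,
      h1, h2, h12, h21]
    ring
  have hn1 : ‖z₁‖ = 1 := by
    have h : ‖z₁‖^2 = 1 := by
      rw [← real_inner_self_eq_norm_sq, ← hz1]
      simp only [inner_add_left, inner_add_right, real_inner_smul_left, real_inner_smul_right,
        h1, h2, h12, h21]
      nlinarith [hP2, hQ2]
    nlinarith [norm_nonneg z₁]
  have hn2 : ‖z₂‖ = 1 := by
    have h : ‖z₂‖^2 = 1 := by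
      rw [← real_inner_self_eq_norm_sq, ← hz2]
      simp only [inner_sub_left, inner_sub_right, real_inner_smul_left, real_inner_smul_right,
        h1, h2, h12, h21]
      nlinarith [hP2, hQ2]
    nlinarith [norm_nonneg z₂]
  have hangle : ⟪z₁, z₂⟫ = c * ‖z₁‖ * ‖z₂‖ := by
    rw [hipz, hn1, hn2, hP2, hQ2]; ring
  have key := hAP z₁ z₂ hangle
  have hSz1 : S z₁ = P • S e₁ + Q • S e₂ := by rw [← hz1]; simp [map_add, map_smul]
  have hSz2 : S z₂ = P • S e₁ - Q • S e₂ := by rw [← hz2]; simp [map_sub, map_smul]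
  have hips : ⟪S z₁, S z₂⟫ = P^2 * μa - Q^2 * μb := by
    rw [hSz1, hSz2]
    simp only [inner_add_left, inner_sub_right, real_inner_smul_left, real_inner_smul_right,
      hT12, hT21, hμa, hμb]
    ring
  obtain ⟨N, hN⟩ : ∃ N:ℝ, P^2 * μa + Q^2 * μb = N := ⟨_, rfl⟩
  have hns1 : ‖S z₁‖^2 = N := by
    rw [← real_inner_self_eq_norm_sq, hSz1, ← hN]
    simp only [inner_add_left, inner_add_right, real_inner_smul_left, real_inner_smul_right,
      hT12, hT21, hμa, hμb]
    ring
  have hns2 : ‖S z₂‖^2 = N := by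
    rw [← real_inner_self_eq_norm_sq, hSz2, ← hN]
    simp only [inner_sub_left, inner_sub_right, real_inner_smul_left, real_inner_smul_right,
      hT12, hT21, hμa, hμb]
    ring
  have hN0 : 0 ≤ N := hns1 ▸ sq_nonneg _
  have hprod : ‖S z₁‖ * ‖S z₂‖ = N := by
    rw [norm_from_sq _ _ hns1, norm_from_sq _ _ hns2, Real.mul_self_sqrt hN0]
  rw [hips] at key
  have hcn : c * ‖S z₁‖ * ‖S z₂‖ = c * N := by rw [mul_assoc, hprod]
  have hen : ε * ‖S z₁‖ * ‖S z₂‖ = ε * N := by rw [mul_assoc, hprod]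
  rw [hcn, hen] at key
  have hval : P^2*μa - Q^2*μb - c * N = (1-c^2)/2 * (μa - μb) := by
    rw [← hN, hP2, hQ2]; ring
  rw [hval] at key
  have h2N : 2*N = (1+c)*μa + (1-c)*μb := by rw [← hN, hP2, hQ2]; ring
  rw [hμa, hμb]
  have habs2 : |(1-c^2)/2 * (μa - μb)| = (1-c^2)/2 * |μa - μb| := by
    rw [abs_mul, abs_of_nonneg (show (0:ℝ) ≤ (1-c^2)/2 by nlinarith)]
  rw [habs2] at key
  calc (1-c^2)*|μa-μb| = 2*((1-c^2)/2 * |μa - μb|) := by ring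
    _ ≤ 2*(ε*N) := by linarith
    _ = ε*(2*N) := by ring
    _ = ε * ((1+c)*μa + (1-c)*μb) := by rw [h2N]

private lemma anglePres_top {H K : Type*} [NormedAddCommGroup H] [InnerProductSpace ℝ H]
    [NormedAddCommGroup K] [InnerProductSpace ℝ K] (c : ℝ) (T : H →L[ℝ] K) :
    AnglePres c (1 + |c|) T := by
  intro x y _
  have h1 := abs_real_inner_le_norm (T x) (T y)
  have h6 := abs_le.1 h1
  have h2 : (0:ℝ) ≤ ‖T x‖*‖T y‖ := by positivity
  have h4 := mul_le_mul_of_nonneg_right (le_abs_self c) h2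
  have h5 := mul_le_mul_of_nonneg_right (neg_abs_le c) h2
  rw [abs_le]
  constructor <;> nlinarith [h6.1, h6.2]

private lemma unit_backward {H : Type*} [NormedAddCommGroup H] [InnerProductSpace ℝ H]
    (c : ℝ) (hc1 : -1 < c) (hc2 : c < 1) (S : H →L[ℝ] H)
    (hinj : ∀ z : H, S z = 0 → z = 0) (xh yh : H)
    (hx1 : ‖xh‖ = 1) (hy1 : ‖yh‖ = 1)
    (hsc : ⟪S xh, S yh⟫ = c * (‖S xh‖ * ‖S yh‖)) :
    |⟪xh, yh⟫ - c| ≤ epsHat c S := by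
  have hne : {ε : ℝ | ε ∈ Set.Icc 0 (1 + |c|) ∧ AnglePres c ε S}.Nonempty :=
    ⟨1+|c|, ⟨⟨by positivity, le_refl _⟩, anglePres_top c S⟩⟩
  have hxx : ⟪xh, xh⟫ = 1 := by rw [real_inner_self_eq_norm_sq, hx1]; norm_num
  have hyy : ⟪yh, yh⟫ = 1 := by rw [real_inner_self_eq_norm_sq, hy1]; norm_num
  have hxh0 : xh ≠ 0 := fun h => by rw [h, norm_zero] at hx1; norm_num at hx1
  have hSx0 : S xh ≠ 0 := fun h => hxh0 (hinj _ h)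
  have hSxpos : 0 < ‖S xh‖ := norm_pos_iff.2 hSx0
  obtain ⟨d, hd⟩ : ∃ d, ⟪xh, yh⟫ = d := ⟨_, rfl⟩
  rw [hd]
  obtain ⟨g, hg⟩ : ∃ g, yh - d • xh = g := ⟨_, rfl⟩
  have hgsq : ‖g‖^2 = 1 - d^2 := by
    rw [← real_inner_self_eq_norm_sq, ← hg]
    simp only [inner_sub_left, inner_sub_right, real_inner_smul_left, real_inner_smul_right,
      hxx, hyy, real_inner_comm xh yh, hd]
    ring
  by_cases hg0 : g = 0
  · -- degenerate case: yh = d • xh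
    have hd2 : d^2 = 1 := by rw [hg0, norm_zero] at hgsq; nlinarith [hgsq]
    have hyx : yh = d • xh := by
      rw [← sub_eq_zero, hg, hg0]
    have hSy : S yh = d • S xh := by rw [hyx, map_smul]
    have hip : ⟪S xh, S yh⟫ = d * (‖S xh‖ * ‖S xh‖) := by
      rw [hSy, real_inner_smul_right, real_inner_self_eq_norm_sq]; ring
    have hdabs : |d| = 1 := by
      rcases mul_eq_zero.1 (show (d-1)*(d+1) = 0 by linear_combination hd2) with h | h
      · rw [show d = 1 by linarith]; norm_num
      · rw [show d = -1 by linarith]; norm_num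
    have hny : ‖S yh‖ = ‖S xh‖ := by
      rw [hSy, norm_smul, Real.norm_eq_abs, hdabs, one_mul]
    rw [hny] at hsc
    have hdc : d = c := by
      have h0 : (0:ℝ) < ‖S xh‖ * ‖S xh‖ := mul_pos hSxpos hSxpos
      have := hip.symm.trans hsc
      exact mul_right_cancel₀ h0.ne' this
    rw [hdc, sub_self, abs_zero]
    exact le_csInf hne fun ε hε => hε.1.1
  · -- main case
    have hw : 0 < ‖g‖ := norm_pos_iff.2 hg0
    obtain ⟨w, hwdef⟩ : ∃ w, ‖g‖ = w := ⟨_, rfl⟩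
    have hw0 : 0 < w := hwdef ▸ hw
    have hw2 : w^2 = 1 - d^2 := by rw [← hwdef]; exact hgsq
    obtain ⟨f, hf⟩ : ∃ f, (w⁻¹ : ℝ) • g = f := ⟨_, rfl⟩
    have hgf : w • f = g := by rw [← hf, smul_smul, mul_inv_cancel₀ hw0.ne', one_smul]
    have hxg : ⟪xh, g⟫ = 0 := by
      rw [← hg]
      simp only [inner_sub_right, real_inner_smul_right, hxx, hd]
      ring
    have hxf : ⟪xh, f⟫ = 0 := by
      rw [← hf, real_inner_smul_right, hxg, mul_zero]
    have hfx : ⟪f, xh⟫ = 0 := by rw [real_inner_comm]; exact hxf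
    have hff : ⟪f, f⟫ = 1 := by
      rw [← hf, real_inner_smul_left, real_inner_smul_right, real_inner_self_eq_norm_sq, hwdef]
      field_simp
    have hyef : yh = d • xh + w • f := by
      rw [hgf, ← hg]; abel
    obtain ⟨p, q, hpq, hrot⟩ := rot_exists (⟪S f, S f⟫ - ⟪S xh, S xh⟫) (⟪S xh, S f⟫)
    obtain ⟨e₁, he₁⟩ : ∃ e, p • xh + q • f = e := ⟨_, rfl⟩
    obtain ⟨e₂, he₂⟩ : ∃ e, (-q) • xh + p • f = e := ⟨_, rfl⟩
    have h11 : ⟪e₁, e₁⟫ = 1 := by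
      rw [← he₁]
      simp only [inner_add_left, inner_add_right, real_inner_smul_left, real_inner_smul_right,
        hxx, hff, hxf, hfx]
      linear_combination hpq
    have h22 : ⟪e₂, e₂⟫ = 1 := by
      rw [← he₂]
      simp only [inner_add_left, inner_add_right, real_inner_smul_left, real_inner_smul_right,
        hxx, hff, hxf, hfx]
      linear_combination hpq
    have h12 : ⟪e₁, e₂⟫ = 0 := by
      rw [← he₁, ← he₂]
      simp only [inner_add_left, inner_add_right, real_inner_smul_left, real_inner_smul_right,
        hxx, hff, hxf, hfx]
      ring
    have hT12 : ⟪S e₁, S e₂⟫ = 0 := by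
      have hSe₁ : S e₁ = p • S xh + q • S f := by rw [← he₁]; simp [map_add, map_smul]
      have hSe₂ : S e₂ = (-q) • S xh + p • S f := by rw [← he₂]; simp [map_add, map_smul]
      rw [hSe₁, hSe₂]
      simp only [inner_add_left, inner_add_right, real_inner_smul_left, real_inner_smul_right,
        real_inner_comm (S xh) (S f)]
      linear_combination hrot
    have hT21 : ⟪S e₂, S e₁⟫ = 0 := by rw [real_inner_comm]; exact hT12
    obtain ⟨μa, hμa⟩ : ∃ m, ⟪S e₁, S e₁⟫ = m := ⟨_, rfl⟩
    obtain ⟨μb, hμb⟩ : ∃ m, ⟪S e₂, S e₂⟫ = m := ⟨_, rfl⟩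
    have he₁0 : e₁ ≠ 0 := fun h => by rw [h] at h11; simp at h11
    have he₂0 : e₂ ≠ 0 := fun h => by rw [h] at h22; simp at h22
    have hμa0 : 0 < μa := by
      have hne0 : ⟪S e₁, S e₁⟫ ≠ 0 := inner_self_ne_zero.2 (fun h => he₁0 (hinj _ h))
      exact hμa ▸ lt_of_le_of_ne real_inner_self_nonneg (Ne.symm hne0)
    have hμb0 : 0 < μb := by
      have hne0 : ⟪S e₂, S e₂⟫ ≠ 0 := inner_self_ne_zero.2 (fun h => he₂0 (hinj _ h))
      exact hμb ▸ lt_of_le_of_ne real_inner_self_nonneg (Ne.symm hne0)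
    -- coordinates
    have hxco : p • e₁ + (-q) • e₂ = xh := by
      have h : p • e₁ + (-q) • e₂ = (p^2+q^2) • xh := by rw [← he₁, ← he₂]; module
      rw [h, hpq, one_smul]
    have hyco : (d*p+w*q) • e₁ + (w*p-d*q) • e₂ = yh := by
      have h : (d*p+w*q) • e₁ + (w*p-d*q) • e₂ = ((p^2+q^2)*d) • xh + ((p^2+q^2)*w) • f := by
        rw [← he₁, ← he₂]; module
      rw [h, hpq, one_mul, one_mul, ← hyef]
    -- scalar data
    have hSxco : S xh = p • S e₁ + (-q) • S e₂ := by rw [← hxco]; simp [map_add, map_smul]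
    have hSyco : S yh = (d*p+w*q) • S e₁ + (w*p-d*q) • S e₂ := by
      rw [← hyco]; simp [map_add, map_smul]
    have ha : ‖S xh‖^2 = μa*p^2 + μb*(-q)^2 := by
      rw [← real_inner_self_eq_norm_sq, hSxco]
      simp only [inner_add_left, inner_add_right, real_inner_smul_left, real_inner_smul_right,
        hT12, hT21, hμa, hμb]
      ring
    have hb : ‖S yh‖^2 = μa*(d*p+w*q)^2 + μb*(w*p-d*q)^2 := by
      rw [← real_inner_self_eq_norm_sq, hSyco]
      simp only [inner_add_left, inner_add_right, real_inner_smul_left, real_inner_smul_right,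
        hT12, hT21, hμa, hμb]
      ring
    have hs : μa*p*(d*p+w*q) + μb*(-q)*(w*p-d*q) = c * (‖S xh‖ * ‖S yh‖) := by
      rw [← hsc, hSxco, hSyco]
      simp only [inner_add_left, inner_add_right, real_inner_smul_left, real_inner_smul_right,
        hT12, hT21, hμa, hμb]
      ring
    have hxco' : p^2 + (-q)^2 = 1 := by linear_combination hpq
    have hyco' : (d*p+w*q)^2 + (w*p-d*q)^2 = 1 := by
      linear_combination (d^2+w^2)*hpq + hw2
    have hdco : p*(d*p+w*q) + (-q)*(w*p-d*q) = d := by linear_combination d*hpq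
    have hcabs : |c| < 1 := abs_lt.2 ⟨hc1, hc2⟩
    have h21 : ⟪e₂, e₁⟫ = 0 := by rw [real_inner_comm]; exact h12
    have habs0 : (0:ℝ) ≤ |c| := abs_nonneg c
    have hepsdef : epsHat c S = sInf {ε : ℝ | ε ∈ Set.Icc 0 (1 + |c|) ∧ AnglePres c ε S} := rfl
    rcases le_total μb μa with hord | hord
    · -- μb ≤ μa
      have hback := backward_bound μa μb c p (-q) (d*p+w*q) (w*p-d*q) (‖S xh‖) (‖S yh‖)
        hμb0 hord hc1 hc2 hxco' hyco' ha hb (norm_nonneg _) (norm_nonneg _) hs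
      rw [show p*(d*p+w*q) + (-q)*(w*p-d*q) = d from hdco] at hback
      have hD : 0 < (1-|c|)*μa + (1+|c|)*μb := by
        have ha' := mul_pos (show (0:ℝ) < 1-|c| by linarith only [hcabs]) hμa0
        have hb' := mul_pos (show (0:ℝ) < 1+|c| by linarith only [habs0]) hμb0
        linarith only [ha', hb']
      have hlow : ∀ ε' ∈ {ε : ℝ | ε ∈ Set.Icc 0 (1 + |c|) ∧ AnglePres c ε S},
          (1-c^2)*(μa-μb) / ((1-|c|)*μa + (1+|c|)*μb) ≤ ε' := by
        intro ε' hε'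
        rw [div_le_iff₀ hD]
        rcases le_or_gt 0 c with h0 | h0
        · have hfp := forward_pair c ε' hc1 hc2 S hε'.2 e₂ e₁ h22 h11 h21 hT21
          rw [hμa, hμb, abs_sub_comm, abs_of_nonneg (by linarith only [hord] : (0:ℝ) ≤ μa - μb)] at hfp
          rw [abs_of_nonneg h0]
          linarith only [hfp]
        · have hfp := forward_pair c ε' hc1 hc2 S hε'.2 e₁ e₂ h11 h22 h12 hT12
          rw [hμa, hμb, abs_of_nonneg (by linarith only [hord] : (0:ℝ) ≤ μa - μb)] at hfp
          rw [abs_of_neg h0]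
          linarith only [hfp]
      have hsInf := le_csInf hne hlow
      rw [div_le_iff₀ hD] at hsInf
      rw [hepsdef]
      refine le_of_mul_le_mul_right ?_ hD
      exact hback.trans hsInf
    · -- μa ≤ μb
      have hback := backward_bound μb μa c (-q) p (w*p-d*q) (d*p+w*q) (‖S xh‖) (‖S yh‖)
        hμa0 hord hc1 hc2 (by linear_combination hpq) (by linear_combination hyco')
        (by linear_combination ha) (by linear_combination hb)
        (norm_nonneg _) (norm_nonneg _) (by linear_combination hs)
      rw [show (-q)*(w*p-d*q) + p*(d*p+w*q) = d from by linear_combination d*hpq] at hback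
      have hD : 0 < (1-|c|)*μb + (1+|c|)*μa := by
        have ha' := mul_pos (show (0:ℝ) < 1-|c| by linarith only [hcabs]) hμb0
        have hb' := mul_pos (show (0:ℝ) < 1+|c| by linarith only [habs0]) hμa0
        linarith only [ha', hb']
      have hlow : ∀ ε' ∈ {ε : ℝ | ε ∈ Set.Icc 0 (1 + |c|) ∧ AnglePres c ε S},
          (1-c^2)*(μb-μa) / ((1-|c|)*μb + (1+|c|)*μa) ≤ ε' := by
        intro ε' hε'
        rw [div_le_iff₀ hD]
        rcases le_or_gt 0 c with h0 | h0
        · have hfp := forward_pair c ε' hc1 hc2 S hε'.2 e₁ e₂ h11 h22 h12 hT12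
          rw [hμa, hμb, abs_sub_comm, abs_of_nonneg (by linarith only [hord] : (0:ℝ) ≤ μb - μa)] at hfp
          rw [abs_of_nonneg h0]
          linarith only [hfp]
        · have hfp := forward_pair c ε' hc1 hc2 S hε'.2 e₂ e₁ h22 h11 h21 hT21
          rw [hμa, hμb, abs_of_nonneg (by linarith only [hord] : (0:ℝ) ≤ μb - μa)] at hfp
          rw [abs_of_neg h0]
          linarith only [hfp]
      have hsInf := le_csInf hne hlow
      rw [div_le_iff₀ hD] at hsInf
      rw [hepsdef]
      refine le_of_mul_le_mul_right ?_ hD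
      exact hback.trans hsInf

private lemma epsHat_symm_le {H : Type*} [NormedAddCommGroup H] [InnerProductSpace ℝ H]
    (c : ℝ) (hc1 : -1 < c) (hc2 : c < 1) (T : H ≃L[ℝ] H) :
    epsHat c (T.symm : H →L[ℝ] H) ≤ epsHat c (T : H →L[ℝ] H) := by
  have hne : {ε : ℝ | ε ∈ Set.Icc 0 (1 + |c|) ∧ AnglePres c ε (T : H →L[ℝ] H)}.Nonempty :=
    ⟨1+|c|, ⟨⟨by positivity, le_refl _⟩, anglePres_top c _⟩⟩
  have hε0 : 0 ≤ epsHat c (T : H →L[ℝ] H) := le_csInf hne fun ε hε => hε.1.1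
  have hεtop : epsHat c (T : H →L[ℝ] H) ≤ 1 + |c| :=
    csInf_le ⟨0, fun ε hε => hε.1.1⟩ ⟨⟨by positivity, le_refl _⟩, anglePres_top c _⟩
  refine csInf_le ⟨0, fun ε hε => hε.1.1⟩ ⟨⟨hε0, hεtop⟩, ?_⟩
  intro u v huv
  simp only [ContinuousLinearEquiv.coe_coe] at huv ⊢
  by_cases hu : u = 0
  · simp [hu]
  by_cases hv : v = 0
  · simp [hv]
  have hinj : ∀ z : H, (T : H →L[ℝ] H) z = 0 → z = 0 := by
    intro z hz
    have : T z = 0 := hz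
    simpa using congrArg T.symm this
  obtain ⟨x, hx⟩ : ∃ x, T.symm u = x := ⟨_, rfl⟩
  obtain ⟨y, hy⟩ : ∃ y, T.symm v = y := ⟨_, rfl⟩
  have hTx : (T : H →L[ℝ] H) x = u := by rw [← hx]; exact T.apply_symm_apply u
  have hTy : (T : H →L[ℝ] H) y = v := by rw [← hy]; exact T.apply_symm_apply v
  have hx0 : x ≠ 0 := fun h => hu (by rw [← hTx, h, map_zero])
  have hy0 : y ≠ 0 := fun h => hv (by rw [← hTy, h, map_zero])
  have hnx : 0 < ‖x‖ := norm_pos_iff.2 hx0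
  have hny : 0 < ‖y‖ := norm_pos_iff.2 hy0
  obtain ⟨xh, hxh⟩ : ∃ z, (‖x‖⁻¹ : ℝ) • x = z := ⟨_, rfl⟩
  obtain ⟨yh, hyh⟩ : ∃ z, (‖y‖⁻¹ : ℝ) • y = z := ⟨_, rfl⟩
  have hxh1 : ‖xh‖ = 1 := by
    rw [← hxh, norm_smul, Real.norm_eq_abs, abs_of_pos (inv_pos.2 hnx), inv_mul_cancel₀ hnx.ne']
  have hyh1 : ‖yh‖ = 1 := by
    rw [← hyh, norm_smul, Real.norm_eq_abs, abs_of_pos (inv_pos.2 hny), inv_mul_cancel₀ hny.ne']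
  have hTxh : (T : H →L[ℝ] H) xh = (‖x‖⁻¹ : ℝ) • u := by rw [← hxh, map_smul, hTx]
  have hTyh : (T : H →L[ℝ] H) yh = (‖y‖⁻¹ : ℝ) • v := by rw [← hyh, map_smul, hTy]
  have hnTxh : ‖(T : H →L[ℝ] H) xh‖ = ‖x‖⁻¹ * ‖u‖ := by
    rw [hTxh, norm_smul, Real.norm_eq_abs, abs_of_pos (inv_pos.2 hnx)]
  have hnTyh : ‖(T : H →L[ℝ] H) yh‖ = ‖y‖⁻¹ * ‖v‖ := by
    rw [hTyh, norm_smul, Real.norm_eq_abs, abs_of_pos (inv_pos.2 hny)]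
  have hsc : ⟪(T : H →L[ℝ] H) xh, (T : H →L[ℝ] H) yh⟫
      = c * (‖(T : H →L[ℝ] H) xh‖ * ‖(T : H →L[ℝ] H) yh‖) := by
    rw [hnTxh, hnTyh, hTxh, hTyh, real_inner_smul_left, real_inner_smul_right, huv]
    ring
  have hkey := unit_backward c hc1 hc2 (T : H →L[ℝ] H) hinj xh yh hxh1 hyh1 hsc
  have hipxy : ⟪xh, yh⟫ = ‖x‖⁻¹ * (‖y‖⁻¹ * ⟪x, y⟫) := by
    rw [← hxh, ← hyh, real_inner_smul_left, real_inner_smul_right]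
  rw [hx, hy]
  have hxyident : ⟪x, y⟫ - c * ‖x‖ * ‖y‖ = (‖x‖*‖y‖) * (⟪xh, yh⟫ - c) := by
    rw [hipxy]; field_simp
  have hxy : 0 < ‖x‖ * ‖y‖ := mul_pos hnx hny
  calc |⟪x, y⟫ - c * ‖x‖ * ‖y‖| = (‖x‖*‖y‖) * |⟪xh, yh⟫ - c| := by
        rw [hxyident, abs_mul, abs_of_pos hxy]
    _ ≤ (‖x‖*‖y‖) * epsHat c (T : H →L[ℝ] H) := mul_le_mul_of_nonneg_left hkey hxy.le
    _ = epsHat c (T : H →L[ℝ] H) * ‖x‖ * ‖y‖ := by ring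

theorem stmt_17 {H : Type*} [NormedAddCommGroup H] [InnerProductSpace ℝ H] [CompleteSpace H]
    (hH : 2 ≤ Module.rank ℝ H)
    (c : ℝ) (hc : c ∈ Set.Ioo (-1 : ℝ) 1) (T : H ≃L[ℝ] H) :
    epsHat c (T.symm : H →L[ℝ] H) = epsHat c (T : H →L[ℝ] H) := by
  obtain ⟨hc1, hc2⟩ := hc
  have h1 := epsHat_symm_le c hc1 hc2 T
  have h2 := epsHat_symm_le c hc1 hc2 T.symm
  rw [T.symm_symm] at h2
  exact le_antisymm h1 h2
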